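/- Let X be an element of the free ℝ-algebra on generators x_1,…,x_d with word-basis coordinates X^V. Let W be a word of length n over {1,…,d}, let k ≥ n+1, and let ψ be the unique ℝ-algebra homomorphism from the free ℝ-algebra on x_1,…,x_d into k×k matrices with entries in the polynomial ring ℝ[θ_1,…,θ_d] that sends x_j to θ_j · A^W_j (the matrix A^W_j with every entry multiplied by the variable θ_j), for j = 1,…,d. Then the coefficient of the monomial ∏_{i=1}^d θ_i^{r^W(i)} in the (1, n+1)-entry of ψ(X) equals X^W. -/

import Mathlib

/-- `E a b` is the `k × k` real matrix whose `(a,b)`-entry is `1` and all other entries are `0`. -/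
def E {k : ℕ} (a b : Fin k) : Matrix (Fin k) (Fin k) ℝ :=
  Matrix.single a b 1

/-- `A^W_i`: for a word `W` (a list over the alphabet `Fin d`) and `k ≥ |W| + 1`, the matrix
`∑_{ℓ : w_ℓ = i} (E^ℓ_{ℓ+1} - E^{ℓ+1}_ℓ)` (zero-based positions). -/
def AW {d k : ℕ} (W : List (Fin d)) (hk : W.length + 1 ≤ k) (i : Fin d) :
    Matrix (Fin k) (Fin k) ℝ :=
  ∑ ℓ : Fin W.length,
    if W.get ℓ = i then
      E ⟨ℓ.1, by have := ℓ.2; omega⟩ ⟨ℓ.1 + 1, by have := ℓ.2; omega⟩ -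
        E ⟨ℓ.1 + 1, by have := ℓ.2; omega⟩ ⟨ℓ.1, by have := ℓ.2; omega⟩
    else 0

/-- The word-basis coordinate `X^V` of an element `X` of the free `ℝ`-algebra on `d`
generators, at the word `V`. -/
noncomputable def coords {d : ℕ} (X : FreeAlgebra ℝ (Fin d)) (V : List (Fin d)) : ℝ :=
  (FreeAlgebra.equivMonoidAlgebraFreeMonoid X : MonoidAlgebra ℝ (FreeMonoid (Fin d))).coeff
    (FreeMonoid.ofList V)

lemma E_apply {k : ℕ} (a b x y : Fin k) :
    E a b x y = if a = x ∧ b = y then 1 else 0 := by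
  simp [E, Matrix.single]

lemma AW_apply {d k : ℕ} (W : List (Fin d)) (hk : W.length + 1 ≤ k) (i : Fin d)
    (a b : Fin k) :
    AW W hk i a b =
      (∑ ℓ : Fin W.length,
        if W.get ℓ = i then
          ((if ℓ.1 = a.1 ∧ ℓ.1 + 1 = b.1 then (1:ℝ) else 0) -
           (if ℓ.1 + 1 = a.1 ∧ ℓ.1 = b.1 then (1:ℝ) else 0)) else 0) := by
  rw [AW, Matrix.sum_apply]
  congr 1; funext ℓ
  split
  · simp [Matrix.sub_apply, E_apply, Fin.ext_iff]
  · simp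

lemma AW_far {d k : ℕ} (W : List (Fin d)) (hk : W.length + 1 ≤ k) (i : Fin d)
    (a b : Fin k) (h1 : a.1 + 1 ≠ b.1) (h2 : b.1 + 1 ≠ a.1) :
    AW W hk i a b = 0 := by
  rw [AW_apply]
  apply Finset.sum_eq_zero
  intro ℓ _
  split
  · rw [if_neg (by omega), if_neg (by omega)]; ring
  · rfl

lemma AW_forward {d k : ℕ} (W : List (Fin d)) (hk : W.length + 1 ≤ k) (i : Fin d)
    (p : ℕ) (hp : p < W.length) (a b : Fin k) (ha : a.1 = p) (hb : b.1 = p + 1) :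
    AW W hk i a b = if W.get ⟨p, hp⟩ = i then 1 else 0 := by
  rw [AW_apply]
  rw [Finset.sum_eq_single ⟨p, hp⟩]
  · rw [ha, hb]; split <;> simp
  · intro ℓ _ hℓ
    have : ℓ.1 ≠ p := fun h => hℓ (Fin.ext h)
    split
    · rw [if_neg (by omega), if_neg (by omega)]; ring
    · rfl
  · simp

lemma prod_bound {d k : ℕ} (W : List (Fin d)) (hk : W.length + 1 ≤ k)
    (V : List (Fin d)) : ∀ (a b : Fin k), a.1 + V.length < b.1 →
    ((V.map (AW W hk)).prod) a b = 0 := by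
  induction V with
  | nil =>
    intro a b h
    simp only [List.map_nil, List.prod_nil]
    exact Matrix.one_apply_ne (by intro e; rw [e] at h; simp at h)
  | cons i V ih =>
    intro a b h
    simp only [List.length_cons] at h
    simp only [List.map_cons, List.prod_cons, Matrix.mul_apply]
    apply Finset.sum_eq_zero
    intro c _
    by_cases hc : c.1 ≤ a.1 + 1
    · rw [ih c b (by omega), mul_zero]
    · rw [AW_far W hk i a c (by omega) (by omega), zero_mul]

lemma prod_entry {d k : ℕ} (W : List (Fin d)) (hk : W.length + 1 ≤ k)
    (V : List (Fin d)) : ∀ (p : ℕ) (hp : p + V.length ≤ W.length) (a b : Fin k),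
    a.1 = p → b.1 = p + V.length →
    ((V.map (AW W hk)).prod) a b =
      if V = (W.drop p).take V.length then 1 else 0 := by
  induction V with
  | nil =>
    intro p hp a b ha hb
    simp only [List.map_nil, List.prod_nil, List.take_zero, List.length_nil]
    have : a = b := Fin.ext (by simp only [List.length_nil] at hb; omega)
    rw [this, Matrix.one_apply_eq]
    simp
  | cons i V ih =>
    intro p hp a b ha hb
    simp only [List.map_cons, List.prod_cons, Matrix.mul_apply, List.length_cons] at *
    have hpW : p < W.length := by omega
    rw [Finset.sum_eq_single (⟨p+1, by omega⟩ : Fin k)]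
    · rw [AW_forward W hk i p hpW a _ ha rfl,
        ih (p+1) (by omega) _ b rfl (by omega)]
      have hdrop : W.drop p = W.get ⟨p, hpW⟩ :: W.drop (p+1) := by
        rw [List.drop_eq_getElem_cons hpW]; rfl
      rw [hdrop]
      simp only [List.take_succ_cons]
      by_cases h1 : W.get ⟨p, hpW⟩ = i
      · by_cases h2 : V = (W.drop (p+1)).take V.length
        · rw [if_pos h1, if_pos h2, one_mul]
          exact (if_pos (by rw [h1, ← h2] : i :: V = W.get ⟨p, hpW⟩ :: (W.drop (p+1)).take V.length)).symm
        · rw [if_pos h1, if_neg h2, mul_zero]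
          exact (if_neg (fun h => h2 (List.cons_eq_cons.mp h).2)).symm
      · rw [if_neg h1, zero_mul]
        exact (if_neg (fun h => h1 ((List.cons_eq_cons.mp h).1.symm))).symm
    · intro c _ hc
      by_cases hc1 : c.1 = p + 1
      · exact absurd (Fin.ext hc1) hc
      by_cases hc2 : c.1 + 1 = p
      · rw [prod_bound W hk V c b (by omega), mul_zero]
      · rw [AW_far W hk i a c (by omega) (by omega), zero_mul]
    · intro h; exact absurd (Finset.mem_univ _) h

open MvPolynomial in
lemma prod_X_eq_monomial' {d : ℕ} (V : List (Fin d)) :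
    (V.map fun v => (X v : MvPolynomial (Fin d) ℝ)).prod =
      monomial (Finsupp.equivFunOnFinite.symm fun i => (V.count i : ℕ)) 1 := by
  induction V with
  | nil =>
    simp only [List.map_nil, List.prod_nil]
    have : (Finsupp.equivFunOnFinite.symm fun i : Fin d => ([].count i : ℕ)) = 0 := by
      ext j; simp
    rw [this, monomial_zero', C_1]
  | cons a V ih =>
    simp only [List.map_cons, List.prod_cons, ih]
    rw [X, monomial_mul, one_mul]
    have hm : (Finsupp.single a 1 + Finsupp.equivFunOnFinite.symm fun i => (V.count i : ℕ)) =
        Finsupp.equivFunOnFinite.symm fun i => ((a :: V).count i : ℕ) := by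
      ext j
      simp only [Finsupp.add_apply, Finsupp.single_apply,
        Finsupp.coe_equivFunOnFinite_symm, List.count_cons, beq_iff_eq]
      by_cases h : a = j
      · subst h; simp [add_comm]
      · simp [h, Ne.symm h]
    rw [hm]

lemma length_eq_sum_count {d : ℕ} (V : List (Fin d)) :
    ∑ i : Fin d, V.count i = V.length := by
  induction V with
  | nil => simp
  | cons a V ih =>
    simp only [List.count_cons, List.length_cons, Finset.sum_add_distrib, ih, beq_iff_eq]
    congr 1
    rw [Finset.sum_ite_eq Finset.univ a (fun _ => 1), if_pos (Finset.mem_univ a)]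

open MvPolynomial in
lemma coeff_key {d : ℕ} (e m : Fin d →₀ ℕ) (c : ℝ) :
    coeff e ((monomial m (1:ℝ)) * C c) = if m = e then c else 0 := by
  rw [C_apply, monomial_mul, one_mul, coeff_monomial, add_zero]

open MvPolynomial in
lemma prod_smul_map {d k : ℕ} (M : Fin d → Matrix (Fin k) (Fin k) ℝ) (V : List (Fin d)) :
    (V.map fun v => (X v : MvPolynomial (Fin d) ℝ) • (M v).map C).prod =
      ((V.map fun v => (X v : MvPolynomial (Fin d) ℝ)).prod •
        ((V.map M).prod).map C : Matrix (Fin k) (Fin k) (MvPolynomial (Fin d) ℝ)) := by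
  induction V with
  | nil => simp [Matrix.map_one _ (map_zero C) (map_one C)]
  | cons a V ih =>
    simp only [List.map_cons, List.prod_cons, ih, smul_mul_assoc, mul_smul_comm, smul_smul,
      ← Matrix.map_mul]
    congr 1
    ring

lemma equiv_word {d : ℕ} (V : List (Fin d)) :
    FreeAlgebra.equivMonoidAlgebraFreeMonoid ((V.map (FreeAlgebra.ι ℝ)).prod) =
      MonoidAlgebra.single (FreeMonoid.ofList V) (1:ℝ) := by
  induction V with
  | nil => simp only [List.map_nil, List.prod_nil, map_one]; rfl
  | cons a V ih =>
    simp only [List.map_cons, List.prod_cons, map_mul, ih]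
    have h0 : FreeAlgebra.equivMonoidAlgebraFreeMonoid (FreeAlgebra.ι ℝ a) =
        MonoidAlgebra.single (FreeMonoid.of a) (1:ℝ) := by
      simp [FreeAlgebra.equivMonoidAlgebraFreeMonoid]
    rw [h0, MonoidAlgebra.single_mul_single, one_mul]
    rfl

open MvPolynomial in
lemma key_word {d k : ℕ} (W : List (Fin d)) (hk : W.length + 1 ≤ k) (V : List (Fin d)) :
    MvPolynomial.coeff (Finsupp.equivFunOnFinite.symm fun i : Fin d => W.count i)
        ((FreeAlgebra.lift ℝ
            (fun j : Fin d =>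
              (MvPolynomial.X j : MvPolynomial (Fin d) ℝ) •
                (AW W hk j).map MvPolynomial.C) ((V.map (FreeAlgebra.ι ℝ)).prod))
          ⟨0, Nat.lt_of_lt_of_le (Nat.succ_pos _) hk⟩
          ⟨W.length, Nat.lt_of_lt_of_le (Nat.lt_succ_self _) hk⟩) = if V = W then 1 else 0 := by
  set ψ := FreeAlgebra.lift ℝ
    (fun j : Fin d => (MvPolynomial.X j : MvPolynomial (Fin d) ℝ) •
      ((AW W hk j).map MvPolynomial.C : Matrix (Fin k) (Fin k) (MvPolynomial (Fin d) ℝ)))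
  have hψ : ψ ((V.map (FreeAlgebra.ι ℝ)).prod) =
      ((V.map fun v => (X v : MvPolynomial (Fin d) ℝ) • (AW W hk v).map C).prod
        : Matrix (Fin k) (Fin k) (MvPolynomial (Fin d) ℝ)) := by
    rw [map_list_prod, List.map_map]
    exact congrArg List.prod (List.map_congr_left fun v _ => by simp [ψ, Function.comp])
  rw [hψ, prod_smul_map, prod_X_eq_monomial', Matrix.smul_apply, Matrix.map_apply,
    smul_eq_mul, coeff_key]
  by_cases hm : (Finsupp.equivFunOnFinite.symm fun i => (V.count i : ℕ)) =
      Finsupp.equivFunOnFinite.symm fun i => (W.count i : ℕ)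
  · rw [if_pos hm]
    have hfn : (fun i => (V.count i : ℕ)) = fun i => (W.count i : ℕ) :=
      Finsupp.equivFunOnFinite.symm.injective hm
    have hcount : ∀ i, V.count i = W.count i := fun i => congrFun hfn i
    have hlen : V.length = W.length := by
      rw [← length_eq_sum_count, ← length_eq_sum_count]
      exact Finset.sum_congr rfl fun i _ => hcount i
    rw [prod_entry W hk V 0 (by omega) _ _ rfl (by simp [hlen])]
    rw [List.drop_zero, hlen, List.take_length]
  · rw [if_neg hm, if_neg]
    intro h
    exact hm (by rw [h])

theorem stmt1 (d k : ℕ) (hd : 0 < d) (W : List (Fin d)) (hk : W.length + 1 ≤ k)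
    (X : FreeAlgebra ℝ (Fin d)) :
    MvPolynomial.coeff (Finsupp.equivFunOnFinite.symm fun i : Fin d => W.count i)
        ((FreeAlgebra.lift ℝ
            (fun j : Fin d =>
              (MvPolynomial.X j : MvPolynomial (Fin d) ℝ) •
                (AW W hk j).map MvPolynomial.C) X)
          ⟨0, by omega⟩ ⟨W.length, by omega⟩) =
      coords X W := by
  classical
  obtain ⟨Y, rfl⟩ : ∃ Y, X = FreeAlgebra.equivMonoidAlgebraFreeMonoid.symm Y :=
    ⟨_, (FreeAlgebra.equivMonoidAlgebraFreeMonoid.symm_apply_apply X).symm⟩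
  induction Y using MonoidAlgebra.induction_linear with
  | zero => simp [coords]
  | add f g hf hg =>
    simp only [map_add, Matrix.add_apply, MvPolynomial.coeff_add, coords,
      AlgEquiv.apply_symm_apply, MonoidAlgebra.coeff_add, Finsupp.add_apply] at *
    rw [hf, hg]
  | single m r =>
    have hsym : FreeAlgebra.equivMonoidAlgebraFreeMonoid.symm
        (MonoidAlgebra.single m r : MonoidAlgebra ℝ (FreeMonoid (Fin d))) =
        r • ((m.toList.map (FreeAlgebra.ι ℝ)).prod) := by
      apply FreeAlgebra.equivMonoidAlgebraFreeMonoid.injective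
      rw [AlgEquiv.apply_symm_apply, map_smul, equiv_word]
      rw [FreeMonoid.ofList_toList]
      rw [MonoidAlgebra.smul_single', mul_one]
    have hR : coords (FreeAlgebra.equivMonoidAlgebraFreeMonoid.symm
        (MonoidAlgebra.single m r : MonoidAlgebra ℝ (FreeMonoid (Fin d)))) W =
        (MonoidAlgebra.single m r : MonoidAlgebra ℝ (FreeMonoid (Fin d))).coeff
          (FreeMonoid.ofList W) := by
      simp [coords]
    rw [hR, hsym, map_smul, Matrix.smul_apply, MvPolynomial.coeff_smul, key_word W hk,
      smul_eq_mul, MonoidAlgebra.coeff_single, Finsupp.single_apply]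
    have hcond : (FreeMonoid.toList m = W) ↔ (m = FreeMonoid.ofList W) := by
      constructor
      · intro h; rw [← h, FreeMonoid.ofList_toList]
      · intro h; rw [h, FreeMonoid.toList_ofList]
    by_cases h : FreeMonoid.toList m = W
    · rw [if_pos h, if_pos (hcond.mp h), mul_one]
    · rw [if_neg h, if_neg (fun hh => h (hcond.mpr hh)), mul_zero]
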